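/- Let Y : ℝⁿ → ℝⁿ be a C¹ local diffeomorphism that is proper (preimages of compact sets are compact, equivalently S_Y = ∅). Then Y is a bijection, hence a global diffeomorphism (Hadamard's global inverse function theorem). -/

import Mathlib

open Set Metric Filter Topology

variable {n : ℕ} {Y : (Fin n → ℝ) → (Fin n → ℝ)}

private lemma contOn_union {f : ℝ → (Fin n → ℝ)} {s t : Set ℝ} (hs : IsClosed s) (ht : IsClosed t)
    (hfs : ContinuousOn f s) (hft : ContinuousOn f t) : ContinuousOn f (s ∪ t) := by
  intro x hx
  have h1 : ContinuousWithinAt f s x := by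
    by_cases h : x ∈ s
    · exact hfs x h
    · exact continuousWithinAt_of_notMem_closure (by rwa [hs.closure_eq])
  have h2 : ContinuousWithinAt f t x := by
    by_cases h : x ∈ t
    · exact hft x h
    · exact continuousWithinAt_of_notMem_closure (by rwa [ht.closure_eq])
  exact h1.union h2

/-- Extension of a lift across one chart. -/
private lemma ext_lift {γ : ℝ → (Fin n → ℝ)} (hγ : Continuous γ)
    {g : ℝ → (Fin n → ℝ)} {u v : ℝ} (h0u : 0 ≤ u) (huv : u ≤ v)
    (hgc : ContinuousOn g (Icc 0 u))
    (hgl : ∀ s ∈ Icc 0 u, Y (g s) = γ s)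
    (e : OpenPartialHomeomorph (Fin n → ℝ) (Fin n → ℝ))
    (heY : Y = e)
    (hgu : g u ∈ e.source)
    (hγt : ∀ s ∈ Icc u v, γ s ∈ e.target) :
    ∃ g' : ℝ → (Fin n → ℝ), ContinuousOn g' (Icc 0 v) ∧ (∀ s ∈ Icc 0 u, g' s = g s) ∧
      (∀ s ∈ Icc 0 v, Y (g' s) = γ s) ∧ g' v = e.symm (γ v) := by
  have hkey : g u = e.symm (γ u) := by
    rw [e.eq_symm_apply hgu (hγt u ⟨le_refl u, huv⟩)]
    rw [← heY]; exact hgl u ⟨h0u, le_refl u⟩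
  refine ⟨fun s => if s ≤ u then g s else e.symm (γ s), ?_, ?_, ?_, ?_⟩
  · have hIcc : Icc (0:ℝ) v = Icc 0 u ∪ Icc u v := (Icc_union_Icc_eq_Icc h0u huv).symm
    rw [hIcc]
    apply contOn_union isClosed_Icc isClosed_Icc
    · exact hgc.congr fun s hs => if_pos hs.2
    · have hsymm : ContinuousOn (fun s => e.symm (γ s)) (Icc u v) :=
        e.symm.continuousOn.comp hγ.continuousOn fun s hs => hγt s hs
      refine hsymm.congr fun s hs => ?_
      by_cases h : s ≤ u
      · have : s = u := le_antisymm h hs.1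
        simp [h, this, hkey]
      · simp [h]
  · intro s hs; simp [hs.2]
  · intro s hs
    by_cases h : s ≤ u
    · simp only [if_pos h]; exact hgl s ⟨hs.1, h⟩
    · simp only [if_neg h]
      have hst : γ s ∈ e.target := hγt s ⟨le_of_lt (lt_of_not_ge h), hs.2⟩
      rw [heY]; exact e.right_inv hst
  · by_cases h : v ≤ u
    · have : v = u := le_antisymm h huv
      simp [h, this, hkey]
    · simp [h]

/-- Existence of lifts of paths. -/
private lemma lift_exists (hloc : IsLocalHomeomorph Y)
    (hprop : ∀ K : Set (Fin n → ℝ), IsCompact K → IsCompact (Y ⁻¹' K))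
    {γ : ℝ → (Fin n → ℝ)} (hγ : Continuous γ) (p : Fin n → ℝ) (hp : Y p = γ 0) :
    ∃ g : ℝ → (Fin n → ℝ), Continuous g ∧ g 0 = p ∧ ∀ s ∈ Icc (0:ℝ) 1, Y (g s) = γ s := by
  classical
  have hsep : IsSeparatedMap Y := T2Space.isSeparatedMap Y
  have hinj : IsLocallyInjective Y := hloc.isLocallyInjective
  set T : Set ℝ := {t | t ∈ Icc (0:ℝ) 1 ∧ ∃ g : ℝ → (Fin n → ℝ),
    ContinuousOn g (Icc 0 t) ∧ g 0 = p ∧ ∀ s ∈ Icc 0 t, Y (g s) = γ s} with hT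
  have h0T : (0:ℝ) ∈ T := by
    refine ⟨⟨le_refl 0, zero_le_one⟩, fun _ => p, continuousOn_const, rfl, ?_⟩
    intro s hs
    have : s = 0 := le_antisymm hs.2 hs.1
    rw [this, hp]
  have hbdd : BddAbove T := ⟨1, fun t ht => ht.1.2⟩
  have hTne : T.Nonempty := ⟨0, h0T⟩
  set c := sSup T with hc
  have hc0 : 0 ≤ c := le_csSup hbdd h0T
  have hc1 : c ≤ 1 := csSup_le hTne fun t ht => ht.1.2
  have hdown : ∀ t ∈ T, ∀ s, 0 ≤ s → s ≤ t → s ∈ T := by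
    rintro t ⟨ht1, g, hgc, hg0, hgl⟩ s hs0 hst
    exact ⟨⟨hs0, hst.trans ht1.2⟩, g, hgc.mono (Icc_subset_Icc_right hst),
      hg0, fun r hr => hgl r ⟨hr.1, hr.2.trans hst⟩⟩
  -- c ∈ T
  have hcT : c ∈ T := by
    by_contra hcT
    have hcpos : 0 < c := by
      rcases eq_or_lt_of_le hc0 with h | h
      · exact absurd (h ▸ h0T) hcT
      · exact h
    have hIco : ∀ t, 0 ≤ t → t < c → t ∈ T := by
      intro t ht0 htc
      obtain ⟨t', ht'T, htt'⟩ := exists_lt_of_lt_csSup hTne htc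
      exact hdown t' ht'T t ht0 (le_of_lt htt')
    -- choice of lifts
    set G : ℝ → (ℝ → (Fin n → ℝ)) := fun t =>
      if h : t ∈ T then h.2.choose else fun _ => p with hG
    have hGspec : ∀ t (h : t ∈ T), ContinuousOn (G t) (Icc 0 t) ∧ (G t) 0 = p ∧
        ∀ s ∈ Icc 0 t, Y ((G t) s) = γ s := by
      intro t h
      simp only [hG, dif_pos h]
      exact h.2.choose_spec
    set g : ℝ → (Fin n → ℝ) := fun t => G t t with hg
    have hcons : ∀ t, t ∈ T → ∀ s ∈ Icc (0:ℝ) t, G t s = g s := by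
      intro t ht s hs
      have hsT : s ∈ T := hdown t ht s hs.1 hs.2
      have h1 := hGspec t ht
      have h2 := hGspec s hsT
      have key : EqOn (G t) (G s) (Icc 0 s) := by
        refine hsep.eqOn_of_comp_eqOn hinj isPreconnected_Icc
          (h1.1.mono (Icc_subset_Icc_right hs.2)) h2.1 ?_ (⟨le_refl 0, hs.1⟩ : (0:ℝ) ∈ Icc 0 s) ?_
        · intro r hr
          simp only [Function.comp_apply]
          rw [h1.2.2 r ⟨hr.1, hr.2.trans hs.2⟩, h2.2.2 r hr]
        · rw [h1.2.1, h2.2.1]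
      exact key ⟨hs.1, le_refl s⟩
    have hgprop : ∀ t, 0 ≤ t → t < c → ContinuousOn g (Icc 0 t) ∧ g 0 = p ∧
        ∀ s ∈ Icc 0 t, Y (g s) = γ s := by
      intro t ht0 htc
      have htT := hIco t ht0 htc
      have hs := hGspec t htT
      refine ⟨hs.1.congr fun s hsm => (hcons t htT s hsm).symm, ?_, ?_⟩
      · rw [← hcons t htT 0 ⟨le_refl 0, ht0⟩, hs.2.1]
      · intro s hsm; rw [← hcons t htT s hsm]; exact hs.2.2 s hsm
    -- compactness
    have hK : IsCompact (Y ⁻¹' (γ '' Icc 0 1)) := hprop _ (isCompact_Icc.image hγ)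
    set tn : ℕ → ℝ := fun k => c - c / (k + 1) with htn
    have htn0 : ∀ k, 0 ≤ tn k := by
      intro k
      have : c / (k+1) ≤ c := by
        apply div_le_self (le_of_lt hcpos)
        have h1 : (1:ℝ) ≤ (k:ℝ) + 1 := by linarith [Nat.cast_nonneg (α := ℝ) k]
        exact h1
      simp only [htn]; linarith
    have htnc : ∀ k, tn k < c := by
      intro k
      have : 0 < c / (k+1) := by positivity
      simp only [htn]; linarith
    have htlim : Tendsto tn atTop (𝓝 c) := by
      have h0 : Tendsto (fun k : ℕ => c / ((k:ℝ) + 1)) atTop (𝓝 0) := by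
        have := (tendsto_const_div_atTop_nhds_zero_nat c).comp (tendsto_add_atTop_nat 1)
        convert this using 2 with k
        simp [Function.comp]
      have h2 := Tendsto.sub (tendsto_const_nhds : Tendsto (fun _ : ℕ => c) atTop (𝓝 c)) h0
      simpa using h2
    have hxK : ∀ k, g (tn k) ∈ Y ⁻¹' (γ '' Icc 0 1) := by
      intro k
      have := (hgprop (tn k) (htn0 k) (htnc k)).2.2 (tn k) ⟨htn0 k, le_refl _⟩
      exact mem_preimage.mpr ⟨tn k, ⟨htn0 k, (htnc k).le.trans hc1⟩, this.symm⟩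
    obtain ⟨x, hxmem, φ, hφ, hxlim⟩ := hK.tendsto_subseq hxK
    have htφlim : Tendsto (fun k => tn (φ k)) atTop (𝓝 c) :=
      htlim.comp hφ.tendsto_atTop
    have hYx : Y x = γ c := by
      have h1 : Tendsto (fun k => Y (g (tn (φ k)))) atTop (𝓝 (Y x)) :=
        (hloc.continuous.tendsto x).comp hxlim
      have h2 : Tendsto (fun k => Y (g (tn (φ k)))) atTop (𝓝 (γ c)) := by
        have : (fun k => Y (g (tn (φ k)))) = fun k => γ (tn (φ k)) := by
          funext k
          exact (hgprop (tn (φ k)) (htn0 _) (htnc _)).2.2 (tn (φ k)) ⟨htn0 _, le_refl _⟩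
        rw [this]
        exact (hγ.tendsto c).comp htφlim
      exact tendsto_nhds_unique h1 h2
    obtain ⟨e, hxe, heY⟩ := hloc x
    have hγc : γ c ∈ e.target := by
      rw [← hYx, heY]; exact e.map_source hxe
    obtain ⟨ε, hε, hball⟩ := Metric.isOpen_iff.mp (hγ.isOpen_preimage _ e.open_target) c hγc
    have hev1 : ∀ᶠ k in atTop, c - ε < tn (φ k) := by
      have : ∀ᶠ y in 𝓝 c, c - ε < y := eventually_gt_nhds (by linarith)
      exact htφlim.eventually this
    have hev2 : ∀ᶠ k in atTop, g (tn (φ k)) ∈ e.source := by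
      have : e.source ∈ 𝓝 x := e.open_source.mem_nhds hxe
      exact hxlim.eventually_mem this
    obtain ⟨k, hk1, hk2⟩ := (hev1.and hev2).exists
    set u := tn (φ k) with hu
    have hup := hgprop u (htn0 _) (htnc _)
    have hγt : ∀ s ∈ Icc u c, γ s ∈ e.target := by
      intro s hs
      apply hball
      rw [mem_ball, Real.dist_eq, abs_lt]
      constructor
      · linarith [hs.1, hk1]
      · linarith [hs.2, hε]
    obtain ⟨g', hg'c, hg'eq, hg'l, _⟩ := ext_lift hγ (htn0 (φ k)) (htnc (φ k)).le
      hup.1 hup.2.2 e heY hk2 hγt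
    have hg'0 : g' 0 = p := by
      rw [hg'eq 0 ⟨le_refl 0, htn0 (φ k)⟩, hup.2.1]
    exact hcT ⟨⟨hc0, hc1⟩, g', hg'c, hg'0, hg'l⟩
  -- c = 1
  have hceq : c = 1 := by
    by_contra h
    have hclt : c < 1 := lt_of_le_of_ne hc1 h
    obtain ⟨_, g, hgc, hg0, hgl⟩ := hcT
    obtain ⟨e, hge, heY⟩ := hloc (g c)
    have hγc : γ c ∈ e.target := by
      rw [← hgl c ⟨hc0, le_refl c⟩, heY]; exact e.map_source hge
    obtain ⟨ε, hε, hball⟩ := Metric.isOpen_iff.mp (hγ.isOpen_preimage _ e.open_target) c hγc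
    set v := min 1 (c + ε/2) with hv
    have hcv : c < v := lt_min hclt (by linarith)
    have hv1 : v ≤ 1 := min_le_left _ _
    have hγt : ∀ s ∈ Icc c v, γ s ∈ e.target := by
      intro s hs
      apply hball
      rw [mem_ball, Real.dist_eq, abs_lt]
      have h2 : s ≤ c + ε/2 := hs.2.trans (min_le_right _ _)
      constructor <;> linarith [hs.1]
    obtain ⟨g', hg'c, hg'eq, hg'l, _⟩ := ext_lift hγ hc0 hcv.le hgc hgl e heY hge hγt
    have hvT : v ∈ T := ⟨⟨hc0.trans hcv.le, hv1⟩, g', hg'c,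
      by rw [hg'eq 0 ⟨le_refl 0, hc0⟩]; exact hg0, hg'l⟩
    exact absurd (le_csSup hbdd hvT) (not_le.mpr hcv)
  obtain ⟨_, g, hgc, hg0, hgl⟩ := hcT
  rw [hceq] at hgc hgl
  refine ⟨fun s => g (projIcc 0 1 zero_le_one s : ℝ), ?_, ?_, ?_⟩
  · apply hgc.comp_continuous (continuous_subtype_val.comp continuous_projIcc)
    intro x; exact (projIcc 0 1 zero_le_one x).2
  · show g _ = p
    rw [projIcc_of_mem zero_le_one (Set.left_mem_Icc.mpr zero_le_one)]
    exact hg0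
  · intro s hs
    show Y (g _) = γ s
    rw [projIcc_of_mem zero_le_one hs]
    exact hgl s hs

/-- Continuity of lifting in the base point: nearby starting points admit lifts with nearby
endpoints. -/
private lemma lift_cont (hloc : IsLocalHomeomorph Y)
    (Γ : (Fin n → ℝ) → ℝ → (Fin n → ℝ))
    (hΓ : Continuous fun q : (Fin n → ℝ) × ℝ => Γ q.1 q.2)
    (p₀ : Fin n → ℝ) {g : ℝ → (Fin n → ℝ)} (hg : Continuous g) (hg0 : g 0 = p₀)
    (hgl : ∀ s ∈ Icc (0:ℝ) 1, Y (g s) = Γ p₀ s)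
    (hΓ0 : ∀ p, Γ p 0 = Y p)
    {ε : ℝ} (hε : 0 < ε) :
    ∀ᶠ p in 𝓝 p₀, ∃ g' : ℝ → (Fin n → ℝ), ContinuousOn g' (Icc 0 1) ∧ g' 0 = p ∧
      (∀ s ∈ Icc (0:ℝ) 1, Y (g' s) = Γ p s) ∧ dist (g' 1) (g 1) < ε := by
  classical
  have hch : ∀ t : ↥(Icc (0:ℝ) 1), ∃ e : OpenPartialHomeomorph (Fin n → ℝ) (Fin n → ℝ),
      g ↑t ∈ e.source ∧ Y = ↑e := fun t => hloc (g ↑t)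
  choose E hEmem hEY using hch
  obtain ⟨δ, hδ, hleb⟩ := lebesgue_number_lemma_of_metric (isCompact_Icc (a := (0:ℝ)) (b := 1))
    (fun t => hg.isOpen_preimage _ (E t).open_source)
    (fun s hs => mem_iUnion.mpr ⟨⟨s, hs⟩, hEmem ⟨s, hs⟩⟩)
  obtain ⟨m, hm⟩ := exists_nat_gt (1/δ)
  have hm0 : 0 < (m:ℝ) := lt_trans (by positivity) hm
  have h1m : 1/(m:ℝ) < δ := by
    rw [div_lt_iff₀ hm0]
    have := (div_lt_iff₀ hδ).mp hm
    nlinarith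
  -- chart for each segment
  have hseg : ∀ i : ℕ, ∃ e : OpenPartialHomeomorph (Fin n → ℝ) (Fin n → ℝ), Y = ↑e ∧
      (i < m → ∀ s ∈ Icc ((i:ℝ)/m) (((i:ℝ)+1)/m), g s ∈ e.source) := by
    intro i
    by_cases hi : i < m
    · have him : (i:ℝ)/m ∈ Icc (0:ℝ) 1 := by
        constructor
        · positivity
        · rw [div_le_one hm0]; exact_mod_cast hi.le
      obtain ⟨t, ht⟩ := hleb ((i:ℝ)/m) him
      refine ⟨E t, hEY t, fun _ s hs => ht ?_⟩
      rw [mem_ball, Real.dist_eq, abs_lt]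
      have hd : ((i:ℝ)+1)/m - (i:ℝ)/m = 1/m := by
        rw [div_sub_div_same]; ring_nf
      constructor
      · linarith [hs.1]
      · linarith [hs.2]
    · exact ⟨E ⟨0, left_mem_Icc.mpr zero_le_one⟩, hEY _, fun h => absurd h hi⟩
  choose C hCY hCs using hseg
  -- radii
  have hrad : ∀ i : ℕ, ∃ r : ℝ, 0 < r ∧ r ≤ ε ∧
      (i < m → ball (g ((i:ℝ)/m)) r ⊆ (C i).source) := by
    intro i
    by_cases hi : i < m
    · have hmem : g ((i:ℝ)/m) ∈ (C i).source := by
        apply hCs i hi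
        refine ⟨le_refl _, ?_⟩
        gcongr
        linarith
      obtain ⟨r, hr, hrs⟩ := Metric.isOpen_iff.mp (C i).open_source _ hmem
      exact ⟨min r ε, lt_min hr hε, min_le_right _ _,
        fun _ => (ball_subset_ball (min_le_left _ _)).trans hrs⟩
    · exact ⟨ε, hε, le_refl ε, fun h => absurd h hi⟩
  choose r hr0 hrε hrball using hrad
  -- the induction
  have key : ∀ i : ℕ, i ≤ m → ∀ᶠ p in 𝓝 p₀, ∃ g' : ℝ → (Fin n → ℝ),
      ContinuousOn g' (Icc 0 ((i:ℝ)/m)) ∧ g' 0 = p ∧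
      (∀ s ∈ Icc (0:ℝ) ((i:ℝ)/m), Y (g' s) = Γ p s) ∧
      dist (g' ((i:ℝ)/m)) (g ((i:ℝ)/m)) < r i := by
    intro i
    induction i with
    | zero =>
      intro _
      filter_upwards [Metric.ball_mem_nhds p₀ (hr0 0)] with p hp
      refine ⟨fun _ => p, continuousOn_const, rfl, ?_, ?_⟩
      · intro s hs
        simp only [Nat.cast_zero, zero_div] at hs
        have hs0 : s = 0 := le_antisymm hs.2 hs.1
        rw [hs0, hΓ0]
      · simp only [Nat.cast_zero, zero_div, hg0]
        exact mem_ball.mp hp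
    | succ i ih =>
      intro him
      have hi : i < m := Nat.lt_of_succ_le him
      have IH := ih (le_of_lt hi)
      set s0 : ℝ := (i:ℝ)/m with hs0def
      set s1 : ℝ := ((i:ℝ)+1)/m with hs1def
      have h0s0 : 0 ≤ s0 := by positivity
      have hs01 : s0 ≤ s1 := by rw [hs0def, hs1def]; gcongr; linarith
      have hs11 : s1 ≤ 1 := by
        rw [hs1def, div_le_one hm0]
        push_cast [← Nat.cast_succ]
        exact_mod_cast him
      have hsub : Icc s0 s1 ⊆ Icc (0:ℝ) 1 := Icc_subset_Icc h0s0 hs11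
      have hs1mem : g s1 ∈ (C i).source := hCs i hi s1 ⟨hs01, le_refl _⟩
      have hΓs1 : Γ p₀ s1 = (C i) (g s1) := by
        rw [← hCY i]
        exact (hgl s1 (hsub ⟨hs01, le_refl _⟩)).symm
      -- E2
      have E2 : ∀ᶠ p in 𝓝 p₀, ∀ s ∈ Icc s0 s1, Γ p s ∈ (C i).target := by
        apply IsCompact.eventually_forall_of_forall_eventually isCompact_Icc
        intro s hs
        have hopen : IsOpen {z : (Fin n → ℝ) × ℝ | Γ z.1 z.2 ∈ (C i).target} :=
          (C i).open_target.preimage hΓ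
        apply hopen.eventually_mem
        show Γ p₀ s ∈ (C i).target
        rw [← hgl s (hsub hs), hCY i]
        exact (C i).map_source (hCs i hi s hs)
      -- E3
      have hFt : Tendsto (fun p => (C i).symm (Γ p s1)) (𝓝 p₀) (𝓝 (g s1)) := by
        have hc1 : Continuous fun p => Γ p s1 := hΓ.comp (continuous_id.prodMk continuous_const)
        have hc2 : ContinuousAt (C i).symm (Γ p₀ s1) := by
          apply (C i).symm.continuousAt
          rw [OpenPartialHomeomorph.symm_source, hΓs1]
          exact (C i).map_source hs1mem
        have hval : (C i).symm (Γ p₀ s1) = g s1 := by rw [hΓs1, (C i).left_inv hs1mem]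
        have hcc : ContinuousAt (fun p => (C i).symm (Γ p s1)) p₀ :=
          ContinuousAt.comp (x := p₀) hc2 hc1.continuousAt
        rw [← hval]
        exact hcc.tendsto
      have E3 : ∀ᶠ p in 𝓝 p₀, dist ((C i).symm (Γ p s1)) (g s1) < r (i+1) := by
        have := hFt (Metric.ball_mem_nhds (g s1) (hr0 (i+1)))
        filter_upwards [this] with p hp
        exact mem_ball.mp hp
      filter_upwards [IH, E2, E3] with p hIH hE2 hE3
      obtain ⟨g', hg'c, hg'0, hg'l, hg'd⟩ := hIH
      have hgu : g' s0 ∈ (C i).source := hrball i hi (mem_ball.mpr hg'd)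
      have hΓpc : Continuous fun s => Γ p s := hΓ.comp (continuous_const.prodMk continuous_id)
      obtain ⟨g'', h1, h2, h3, h4⟩ := ext_lift hΓpc h0s0 hs01 hg'c hg'l (C i) (hCY i) hgu hE2
      have hcast : ((i+1 : ℕ):ℝ)/m = s1 := by push_cast; rfl
      rw [hcast]
      exact ⟨g'', h1, by rw [h2 0 ⟨le_refl 0, h0s0⟩]; exact hg'0, h3,
        by rw [h4]; exact hE3⟩
  have final := key m (le_refl m)
  have hmm : ((m:ℝ))/m = 1 := div_self (ne_of_gt hm0)
  filter_upwards [final] with p hp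
  obtain ⟨g', h1, h2, h3, h4⟩ := hp
  rw [hmm] at h1 h3 h4
  exact ⟨g', h1, h2, h3, lt_of_lt_of_le h4 (hrε m)⟩

/-- Hadamard's global inverse function theorem: a proper `C¹` local diffeomorphism
`Y : ℝⁿ → ℝⁿ` is bijective. -/
theorem stmt18 {n : ℕ} (Y : (Fin n → ℝ) → (Fin n → ℝ)) (hY : ContDiff ℝ 1 Y)
    (hld : ∀ p, Function.Bijective (fderiv ℝ Y p))
    (hproper : ∀ K : Set (Fin n → ℝ), IsCompact K → IsCompact (Y ⁻¹' K)) :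
    Function.Bijective Y := by
  classical
  -- Y is a local homeomorphism
  have hloc : IsLocalHomeomorph Y := by
    apply IsLocalHomeomorph.mk
    intro p
    have hda : HasStrictFDerivAt Y (fderiv ℝ Y p) p :=
      (hY.contDiffAt).hasStrictFDerivAt one_ne_zero
    have hbij : Function.Bijective ((fderiv ℝ Y p).toLinearMap) := hld p
    let eqv : (Fin n → ℝ) ≃L[ℝ] (Fin n → ℝ) :=
      LinearEquiv.toContinuousLinearEquiv (LinearEquiv.ofBijective _ hbij)
    have heq : ((eqv : (Fin n → ℝ) ≃L[ℝ] (Fin n → ℝ)) :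
        (Fin n → ℝ) →L[ℝ] (Fin n → ℝ)) = fderiv ℝ Y p := by
      ext v; rfl
    have hda' : HasStrictFDerivAt Y (eqv : (Fin n → ℝ) →L[ℝ] (Fin n → ℝ)) p := by
      rw [heq]; exact hda
    refine ⟨hda'.toOpenPartialHomeomorph Y, ?_, ?_⟩
    · exact hda'.mem_toOpenPartialHomeomorph_source
    · intro x _
      rfl
  have hsep : IsSeparatedMap Y := T2Space.isSeparatedMap Y
  have hinj : IsLocallyInjective Y := hloc.isLocallyInjective
  -- surjectivity
  have hsurj : Function.Surjective Y := by
    have hprop : IsProperMap Y :=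
      isProperMap_iff_isCompact_preimage.mpr ⟨hloc.continuous, fun K hK => hproper K hK⟩
    have hclopen : IsClopen (range Y) := ⟨hprop.isClosed_range, hloc.isOpenMap.isOpen_range⟩
    have := hclopen.eq_univ (⟨Y 0, mem_range_self 0⟩ : (range Y).Nonempty)
    exact range_eq_univ.mp this
  -- injectivity
  have hinjective : Function.Injective Y := by
    intro a b hab
    set Γ : (Fin n → ℝ) → ℝ → (Fin n → ℝ) := fun p t => Y p + t • (Y a - Y p) with hΓdef
    have hΓc : Continuous fun q : (Fin n → ℝ) × ℝ => Γ q.1 q.2 := by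
      apply Continuous.add
      · exact hloc.continuous.comp continuous_fst
      · exact continuous_snd.smul
          ((continuous_const.sub (hloc.continuous.comp continuous_fst)))
    have hΓp : ∀ p, Continuous (Γ p) := fun p =>
      hΓc.comp (continuous_const.prodMk continuous_id)
    have hΓ0 : ∀ p, Γ p 0 = Y p := by intro p; simp [hΓdef]
    have hΓ1 : ∀ p, Γ p 1 = Y a := by intro p; simp [hΓdef]
    -- the set of points from which every lift of the segment to Y a ends at a
    set S : Set (Fin n → ℝ) := {p | ∀ g : ℝ → (Fin n → ℝ), ContinuousOn g (Icc 0 1) →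
      g 0 = p → (∀ s ∈ Icc (0:ℝ) 1, Y (g s) = Γ p s) → g 1 = a} with hSdef
    -- uniqueness of lifts
    have huniq : ∀ p, ∀ g₁ g₂ : ℝ → (Fin n → ℝ), ContinuousOn g₁ (Icc 0 1) →
        ContinuousOn g₂ (Icc 0 1) → g₁ 0 = g₂ 0 →
        (∀ s ∈ Icc (0:ℝ) 1, Y (g₁ s) = Γ p s) → (∀ s ∈ Icc (0:ℝ) 1, Y (g₂ s) = Γ p s) →
        g₁ 1 = g₂ 1 := by
      intro p g₁ g₂ h₁ h₂ h0 hl₁ hl₂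
      have := hsep.eqOn_of_comp_eqOn hinj isPreconnected_Icc h₁ h₂
        (fun s hs => by simp only [Function.comp_apply]; rw [hl₁ s hs, hl₂ s hs])
        (left_mem_Icc.mpr zero_le_one) h0
      exact this (right_mem_Icc.mpr zero_le_one)
    have haS : a ∈ S := by
      intro g hgc hg0 hgl
      refine huniq a g (fun _ => a) hgc continuousOn_const hg0 hgl ?_
      intro s hs
      rw [hΓdef]; simp
    have hendpoint : ∀ p₀ (g : ℝ → (Fin n → ℝ)), Continuous g → g 0 = p₀ →
        (∀ s ∈ Icc (0:ℝ) 1, Y (g s) = Γ p₀ s) →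
        ∀ c : Fin n → ℝ, g 1 = c →
        ∀ᶠ p in 𝓝 p₀, ∃ g' : ℝ → (Fin n → ℝ), ContinuousOn g' (Icc 0 1) ∧ g' 0 = p ∧
          (∀ s ∈ Icc (0:ℝ) 1, Y (g' s) = Γ p s) ∧ g' 1 = c := by
      intro p₀ g hgc hg0 hgl c hg1
      obtain ⟨e, hce, heY⟩ := hloc c
      obtain ⟨ε, hε, hball⟩ := Metric.isOpen_iff.mp e.open_source c hce
      have hev := lift_cont hloc Γ hΓc p₀ hgc hg0 hgl hΓ0 hε
      filter_upwards [hev] with p hp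
      obtain ⟨g', h1, h2, h3, h4⟩ := hp
      refine ⟨g', h1, h2, h3, ?_⟩
      rw [hg1] at h4
      have hmem : g' 1 ∈ e.source := hball (mem_ball.mpr h4)
      have hYeq : Y (g' 1) = Y c := by
        rw [h3 1 (right_mem_Icc.mpr zero_le_one), hΓ1]
        have : Y (g 1) = Γ p₀ 1 := hgl 1 (right_mem_Icc.mpr zero_le_one)
        rw [hg1] at this
        rw [this, hΓ1]
      apply e.injOn hmem hce
      rw [← heY]; exact hYeq
    -- S is open
    have hSopen : IsOpen S := by
      rw [isOpen_iff_mem_nhds]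
      intro p₀ hp₀
      obtain ⟨g, hgc, hg0, hgl⟩ := lift_exists hloc hproper (hΓp p₀) p₀ (hΓ0 p₀).symm
      have hg1 : g 1 = a := hp₀ g hgc.continuousOn hg0 hgl
      have hev := hendpoint p₀ g hgc hg0 hgl a hg1
      apply Filter.mem_of_superset hev
      rintro p ⟨g', h1, h2, h3, h4⟩
      intro h hc h0 hl
      rw [huniq p h g' hc h1 (by rw [h0, h2]) hl h3]
      exact h4
    -- Sᶜ is open
    have hScopen : IsOpen Sᶜ := by
      rw [isOpen_iff_mem_nhds]
      intro p₀ hp₀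
      obtain ⟨g, hgc, hg0, hgl⟩ := lift_exists hloc hproper (hΓp p₀) p₀ (hΓ0 p₀).symm
      have hg1 : g 1 ≠ a := by
        intro h
        exact hp₀ fun h' hc h0 hl => by
          rw [huniq p₀ h' g hc hgc.continuousOn (by rw [h0, hg0]) hl hgl]; exact h
      have hev := hendpoint p₀ g hgc hg0 hgl (g 1) rfl
      apply Filter.mem_of_superset hev
      rintro p ⟨g', h1, h2, h3, h4⟩
      intro hpS
      have : g' 1 = a := hpS g' h1 h2 h3
      exact hg1 (by rw [← h4, this])
    -- conclude
    have hSuniv : S = univ := IsClopen.eq_univ ⟨isOpen_compl_iff.mp hScopen, hSopen⟩ ⟨a, haS⟩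
    have hbS : b ∈ S := hSuniv ▸ mem_univ b
    have hconstb : ∀ s ∈ Icc (0:ℝ) 1, Y ((fun _ => b) s) = Γ b s := by
      intro s hs
      rw [hΓdef]
      simp [← hab]
    exact (hbS (fun _ => b) continuousOn_const rfl hconstb).symm
  exact ⟨hinjective, hsurj⟩
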